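/- arXiv:1204.3366 — 4 statements merged into one kernel-verified Lean document; each statement's English description precedes it below -/
import Mathlib

section
/- Let R be a ring with identity, p an idempotent of R, and φ : R → pRp a corner isomorphism. The corner skew Laurent polynomial ring A = R[t₊, t₋, φ], with its natural ℤ-grading (deg t₊ = 1, deg t₋ = −1, A₀ = R), is a strongly graded ring if and only if φ(1) is a full idempotent of R (i.e., R·φ(1)·R = R). -/
/-- The product of two additive subgroups of a ring. -/
def sgMul {A : Type} [Ring A] (S T : AddSubgroup A) : AddSubgroup A :=
  AddSubgroup.closure {x | ∃ s ∈ S, ∃ t ∈ T, x = s * t}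

/-- A ℤ-graded ring `A = ⊕ᵢ Aᵢ` is *strongly graded* if `AᵢAⱼ = Aᵢ₊ⱼ` for all `i, j`. -/
def IsStronglyGraded {A : Type} [Ring A] (𝒜 : ℤ → AddSubgroup A) : Prop :=
  ∀ i j : ℤ, sgMul (𝒜 i) (𝒜 j) = 𝒜 (i + j)

section Aux

variable {A : Type} [Ring A]

lemma mul_mem_sgMul {S T : AddSubgroup A} {s t : A} (hs : s ∈ S) (ht : t ∈ T) :
    s * t ∈ sgMul S T :=
  AddSubgroup.subset_closure ⟨s, hs, t, ht, rfl⟩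

lemma cast_mem (𝒜 : ℤ → AddSubgroup A) {i j : ℤ} (h : i = j) {a : A} (ha : a ∈ 𝒜 i) :
    a ∈ 𝒜 j := h ▸ ha

lemma sg_cast (𝒜 : ℤ → AddSubgroup A) {i i' j j' : ℤ} (h : i = i') (h' : j = j') {x : A}
    (hx : x ∈ sgMul (𝒜 i) (𝒜 j)) : x ∈ sgMul (𝒜 i') (𝒜 j') := h ▸ h' ▸ hx

lemma sandwich (𝒜 : ℤ → AddSubgroup A)
    (hmul : ∀ {i j : ℤ} {a b : A}, a ∈ 𝒜 i → b ∈ 𝒜 j → a * b ∈ 𝒜 (i + j))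
    {a b c d : ℤ} {x s t : A} (hx : x ∈ sgMul (𝒜 c) (𝒜 d))
    (hs : s ∈ 𝒜 a) (ht : t ∈ 𝒜 b) :
    s * x * t ∈ sgMul (𝒜 (a + c)) (𝒜 (d + b)) := by
  induction hx using AddSubgroup.closure_induction with
  | mem x hx =>
    obtain ⟨u, hu, v, hv, rfl⟩ := hx
    have : s * (u * v) * t = (s * u) * (v * t) := by noncomm_ring
    rw [this]
    exact mul_mem_sgMul (hmul hs hu) (hmul hv ht)
  | zero => simpa using (sgMul (𝒜 (a + c)) (𝒜 (d + b))).zero_mem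
  | add x y hx hy ihx ihy =>
    have : s * (x + y) * t = s * x * t + s * y * t := by noncomm_ring
    rw [this]; exact add_mem ihx ihy
  | neg x hx ih =>
    have : s * (-x) * t = -(s * x * t) := by noncomm_ring
    rw [this]; exact neg_mem ih

lemma step (𝒜 : ℤ → AddSubgroup A)
    (hmul : ∀ {i j : ℤ} {a b : A}, a ∈ 𝒜 i → b ∈ 𝒜 j → a * b ∈ 𝒜 (i + j))
    {a b c d : ℤ} (h1 : (1 : A) ∈ sgMul (𝒜 a) (𝒜 b)) (h2 : (1 : A) ∈ sgMul (𝒜 c) (𝒜 d)) :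
    (1 : A) ∈ sgMul (𝒜 (a + c)) (𝒜 (d + b)) := by
  have key : ∀ x : A, x ∈ sgMul (𝒜 a) (𝒜 b) → x ∈ sgMul (𝒜 (a + c)) (𝒜 (d + b)) := by
    intro x hx
    induction hx using AddSubgroup.closure_induction with
    | mem x hx =>
      obtain ⟨s, hs, t, ht, rfl⟩ := hx
      have : s * t = s * (1 : A) * t := by rw [mul_one]
      rw [this]
      exact sandwich 𝒜 hmul h2 hs ht
    | zero => exact zero_mem _
    | add x y hx hy ihx ihy => exact add_mem ihx ihy
    | neg x hx ih => exact neg_mem ih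
  exact key 1 h1

lemma one_mem_all (𝒜 : ℤ → AddSubgroup A)
    (hmul : ∀ {i j : ℤ} {a b : A}, a ∈ 𝒜 i → b ∈ 𝒜 j → a * b ∈ 𝒜 (i + j))
    (h0 : (1 : A) ∈ 𝒜 0)
    (h1 : (1 : A) ∈ sgMul (𝒜 1) (𝒜 (-1)))
    (h1' : (1 : A) ∈ sgMul (𝒜 (-1)) (𝒜 1)) :
    ∀ i : ℤ, (1 : A) ∈ sgMul (𝒜 i) (𝒜 (-i)) := by
  intro i
  induction i using Int.induction_on with
  | zero =>
    have := mul_mem_sgMul h0 h0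
    rw [mul_one] at this
    simpa using this
  | succ i ih =>
    exact sg_cast 𝒜 (by omega) (by omega) (step 𝒜 hmul h1 ih)
  | pred i ih =>
    exact sg_cast 𝒜 (by omega) (by omega) (step 𝒜 hmul h1' ih)

lemma mem_sgMul_of_one (𝒜 : ℤ → AddSubgroup A)
    (hmul : ∀ {i j : ℤ} {a b : A}, a ∈ 𝒜 i → b ∈ 𝒜 j → a * b ∈ 𝒜 (i + j))
    {i j : ℤ} (h1 : (1 : A) ∈ sgMul (𝒜 i) (𝒜 (-i))) {a : A} (ha : a ∈ 𝒜 (i + j)) :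
    a ∈ sgMul (𝒜 i) (𝒜 j) := by
  have key : ∀ x : A, x ∈ sgMul (𝒜 i) (𝒜 (-i)) → x * a ∈ sgMul (𝒜 i) (𝒜 j) := by
    intro x hx
    induction hx using AddSubgroup.closure_induction with
    | mem x hx =>
      obtain ⟨s, hs, t, ht, rfl⟩ := hx
      rw [mul_assoc]
      exact mul_mem_sgMul hs (cast_mem 𝒜 (by omega) (hmul ht ha))
    | zero => simpa using zero_mem _
    | add x y hx hy ihx ihy => rw [add_mul]; exact add_mem ihx ihy
    | neg x hx ih => rw [neg_mul]; exact neg_mem ih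
  simpa using key 1 h1

end Aux

/-- A corner skew Laurent polynomial ring `A = R[t₊, t₋, φ]`
(with `R = A₀`, `φ : R → pRp`, `φ(r) = t₊ r t₋`, `p = t₊t₋ = φ(1)`) is, with its natural
ℤ-grading, exactly a ℤ-graded ring `A` together with `t₊ ∈ A₁`, `t₋ ∈ A₋₁` with
`t₋t₊ = 1` (by Ara–González-Barroso–Goodearl–Pardo, Lemma 2.4; the relations
`r t₋ = t₋ φ(r)` and `t₊ r = φ(r) t₊` as well as `Aᵢ = R pᵢ t₊ⁱ`, `A₋ᵢ = t₋ⁱ pᵢ R` are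
then automatic).  The theorem: `A` is strongly graded if and only if `φ(1) = t₊t₋` is a
full idempotent of `R = A₀`, i.e. the two-sided ideal of `A₀` generated by `t₊t₋`
(the additive group generated by `r (t₊t₋) r'` with `r, r' ∈ A₀`) is all of `A₀`. -/
theorem corner_skew_laurent_strongly_graded_iff_full {A : Type} [Ring A]
    (𝒜 : ℤ → AddSubgroup A) [GradedRing 𝒜]
    (tp tm : A) (htp : tp ∈ 𝒜 1) (htm : tm ∈ 𝒜 (-1)) (hinv : tm * tp = 1) :
    IsStronglyGraded 𝒜 ↔
      (∀ a ∈ 𝒜 0, a ∈ AddSubgroup.closure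
        {x | ∃ r ∈ 𝒜 0, ∃ r' ∈ 𝒜 0, x = r * (tp * tm) * r'}) := by
  have hmul : ∀ {i j : ℤ} {a b : A}, a ∈ 𝒜 i → b ∈ 𝒜 j → a * b ∈ 𝒜 (i + j) :=
    fun ha hb => SetLike.mul_mem_graded ha hb
  have h0 : (1 : A) ∈ 𝒜 0 := SetLike.one_mem_graded 𝒜
  have hkey : ∀ z : A, tm * (tp * z) = z := fun z => by rw [← mul_assoc, hinv, one_mul]
  constructor
  · intro h a ha
    have ha' : a ∈ sgMul (𝒜 1) (𝒜 (-1)) := by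
      rw [h 1 (-1)]
      exact cast_mem 𝒜 (by omega) ha
    clear ha
    induction ha' using AddSubgroup.closure_induction with
    | mem x hx =>
      obtain ⟨s, hs, t, ht, rfl⟩ := hx
      refine AddSubgroup.subset_closure ⟨s * tm, cast_mem 𝒜 (by omega) (hmul hs htm),
        tp * t, cast_mem 𝒜 (by omega) (hmul htp ht), ?_⟩
      simp only [mul_assoc, hkey]
    | zero => simpa using zero_mem _
    | add x y hx hy ihx ihy => exact add_mem ihx ihy
    | neg x hx ih => exact neg_mem ih
  · intro hfull i j
    have h1 : (1 : A) ∈ sgMul (𝒜 1) (𝒜 (-1)) := by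
      have key : ∀ x ∈ AddSubgroup.closure
          {x | ∃ r ∈ 𝒜 0, ∃ r' ∈ 𝒜 0, x = r * (tp * tm) * r'},
          x ∈ sgMul (𝒜 1) (𝒜 (-1)) := by
        intro x hx
        induction hx using AddSubgroup.closure_induction with
        | mem x hx =>
          obtain ⟨r, hr, r', hr', rfl⟩ := hx
          have : r * (tp * tm) * r' = (r * tp) * (tm * r') := by noncomm_ring
          rw [this]
          exact mul_mem_sgMul (cast_mem 𝒜 (by omega) (hmul hr htp))
            (cast_mem 𝒜 (by omega) (hmul htm hr'))
        | zero => exact zero_mem _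
        | add x y hx hy ihx ihy => exact add_mem ihx ihy
        | neg x hx ih => exact neg_mem ih
      exact key 1 (hfull 1 h0)
    have h1' : (1 : A) ∈ sgMul (𝒜 (-1)) (𝒜 1) := hinv ▸ mul_mem_sgMul htm htp
    apply le_antisymm
    · refine (AddSubgroup.closure_le _).2 ?_
      rintro x ⟨s, hs, t, ht, rfl⟩
      exact hmul hs ht
    · intro a ha
      exact mem_sgMul_of_one 𝒜 hmul (one_mem_all 𝒜 hmul h0 h1 h1' i) ha
end

section
/- Let A = ⊕_{i∈ℤ} Aᵢ be a ℤ-graded ring. Then A is strongly graded if and only if 1 ∈ A₁A₋₁ and 1 ∈ A₋₁A₁. -/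
/-- `sgMul` agrees with multiplication of ℤ-submodules. -/
lemma sgMul_toIntSubmodule {A : Type} [Ring A] (S T : AddSubgroup A) :
    AddSubgroup.toIntSubmodule (sgMul S T) =
      AddSubgroup.toIntSubmodule S * AddSubgroup.toIntSubmodule T := by
  apply le_antisymm
  · intro x hx
    have hx' : x ∈ sgMul S T := hx
    refine AddSubgroup.closure_induction ?_ ?_ ?_ ?_ hx'
    · rintro y ⟨s, hs, t, ht, rfl⟩
      exact Submodule.mul_mem_mul hs ht
    · exact zero_mem _
    · intro a b _ _ ha hb; exact add_mem ha hb
    · intro a _ ha; exact neg_mem ha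
  · rw [Submodule.mul_le]
    intro s hs t ht
    exact AddSubgroup.subset_closure ⟨s, hs, t, ht, rfl⟩

/-- Let `A = ⊕_{i∈ℤ} Aᵢ` be a ℤ-graded ring.  Then `A` is strongly graded
if and only if `1 ∈ A₁A₋₁` and `1 ∈ A₋₁A₁`. -/
theorem strongly_graded_iff_one_mem {A : Type} [Ring A]
    (𝒜 : ℤ → AddSubgroup A) [GradedRing 𝒜] :
    IsStronglyGraded 𝒜 ↔
      ((1 : A) ∈ sgMul (𝒜 1) (𝒜 (-1)) ∧ (1 : A) ∈ sgMul (𝒜 (-1)) (𝒜 1)) := by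
  set M : ℤ → Submodule ℤ A := fun i => AddSubgroup.toIntSubmodule (𝒜 i) with hMdef
  have hmemM : ∀ {i : ℤ} {x : A}, x ∈ M i ↔ x ∈ 𝒜 i := fun {i x} => Iff.rfl
  have hle : ∀ i j : ℤ, M i * M j ≤ M (i + j) := by
    intro i j
    rw [Submodule.mul_le]
    intro s hs t ht
    exact hmemM.mpr (SetLike.mul_mem_graded (hmemM.mp hs) (hmemM.mp ht))
  have hone : (1 : A) ∈ M 0 := hmemM.mpr (SetLike.GradedOne.one_mem (A := 𝒜))
  constructor
  · intro h
    constructor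
    · rw [h 1 (-1)]
      norm_num
      exact hone
    · rw [h (-1) 1]
      norm_num
      exact hone
  · rintro ⟨h1, h2⟩
    have h1' : (1 : A) ∈ M 1 * M (-1) := by
      rw [show M 1 * M (-1) = AddSubgroup.toIntSubmodule (sgMul (𝒜 1) (𝒜 (-1))) from
        (sgMul_toIntSubmodule _ _).symm]
      exact h1
    have h2' : (1 : A) ∈ M (-1) * M 1 := by
      rw [show M (-1) * M 1 = AddSubgroup.toIntSubmodule (sgMul (𝒜 (-1)) (𝒜 1)) from
        (sgMul_toIntSubmodule _ _).symm]
      exact h2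
    -- key: 1 ∈ M i * M (-i) for all i
    have key : ∀ i : ℤ, (1 : A) ∈ M i * M (-i) := by
      intro i
      induction i using Int.induction_on with
      | zero => simpa using Submodule.mul_mem_mul hone hone
      | succ i ih =>
        have step1 : M (-1) ≤ (M i * M (-i)) * M (-1) := by
          intro x hx
          simpa using Submodule.mul_mem_mul ih hx
        have : (1 : A) ∈ M 1 * ((M i * M (-i)) * M (-1)) :=
          mul_le_mul' le_rfl step1 h1'
        have hass : M 1 * ((M i * M (-i)) * M (-1)) = (M 1 * M i) * (M (-i) * M (-1)) := by
          rw [mul_assoc, mul_assoc]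
        rw [hass] at this
        have hfin : (M 1 * M i) * (M (-i) * M (-1)) ≤ M (i + 1) * M (-(i + 1)) := by
          refine mul_le_mul' ?_ ?_
          · have := hle 1 i
            rwa [show (1 : ℤ) + i = i + 1 by ring] at this
          · have := hle (-i) (-1)
            rwa [show (-i : ℤ) + -1 = -(i + 1) by ring] at this
        exact hfin this
      | pred i ih =>
        have step1 : M 1 ≤ (M (-i) * M i) * M 1 := by
          intro x hx
          have ih' : (1 : A) ∈ M (-i) * M i := by
            simpa using ih
          simpa using Submodule.mul_mem_mul ih' hx
        have : (1 : A) ∈ M (-1) * ((M (-i) * M i) * M 1) :=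
          mul_le_mul' le_rfl step1 h2'
        have hass : M (-1) * ((M (-i) * M i) * M 1) = (M (-1) * M (-i)) * (M i * M 1) := by
          rw [mul_assoc, mul_assoc]
        rw [hass] at this
        have hfin : (M (-1) * M (-i)) * (M i * M 1) ≤ M (-i - 1) * M (-(-i - 1)) := by
          refine mul_le_mul' ?_ ?_
          · have := hle (-1) (-i)
            rwa [show (-1 : ℤ) + -i = -i - 1 by ring] at this
          · have := hle i 1
            rwa [show (i : ℤ) + 1 = -(-i - 1) by ring] at this
        exact hfin this
    -- conclude
    intro i j
    apply AddSubgroup.toIntSubmodule.injective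
    rw [sgMul_toIntSubmodule]
    show M i * M j = M (i + j)
    apply le_antisymm (hle i j)
    intro x hx
    have hx1 : (1 : A) * x ∈ (M i * M (-i)) * M (i + j) :=
      Submodule.mul_mem_mul (key i) hx
    rw [one_mul, mul_assoc] at hx1
    have hsub : M (-i) * M (i + j) ≤ M j := by
      have := hle (-i) (i + j)
      rwa [show (-i : ℤ) + (i + j) = j by ring] at this
    exact mul_le_mul' le_rfl hsub hx1
end

section
/- Let E be a finite directed graph. The Leavitt path algebra L_K(E) over a field K, with its natural ℤ-grading, is a strongly graded ring if and only if E has no sinks. -/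
/-- A finite directed graph. -/
structure DirGraph where
  V : Type
  E : Type
  [fintypeV : Fintype V]
  [fintypeE : Fintype E]
  [decEqV : DecidableEq V]
  [decEqE : DecidableEq E]
  /-- source of an edge -/
  s : E → V
  /-- range of an edge -/
  r : E → V

attribute [instance] DirGraph.fintypeV DirGraph.fintypeE DirGraph.decEqV DirGraph.decEqE

namespace DirGraph
/-- A sink is a vertex emitting no edges. -/
def IsSink (G : DirGraph) (v : G.V) : Prop := ∀ e : G.E, G.s e ≠ v
/-- A source is a vertex receiving no edges. -/
def IsSource (G : DirGraph) (v : G.V) : Prop := ∀ e : G.E, G.r e ≠ v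
end DirGraph

/-- Generators of the Leavitt path algebra: vertices, edges and ghost edges. -/
inductive LGen (G : DirGraph) : Type
  | vert (v : G.V)
  | edge (e : G.E)
  | ghost (e : G.E)

open FreeAlgebra in
/-- The defining relations of the Leavitt path algebra of a finite graph. -/
inductive LRel (K : Type) [Field K] (G : DirGraph) :
    FreeAlgebra K (LGen G) → FreeAlgebra K (LGen G) → Prop
  | vert_mul (v w : G.V) : LRel K G (ι K (LGen.vert v) * ι K (LGen.vert w))
      (if v = w then ι K (LGen.vert v) else 0)
  | sum_verts : LRel K G (∑ v : G.V, ι K (LGen.vert v)) 1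
  | s_edge (e : G.E) : LRel K G (ι K (LGen.vert (G.s e)) * ι K (LGen.edge e)) (ι K (LGen.edge e))
  | edge_r (e : G.E) : LRel K G (ι K (LGen.edge e) * ι K (LGen.vert (G.r e))) (ι K (LGen.edge e))
  | r_ghost (e : G.E) : LRel K G (ι K (LGen.vert (G.r e)) * ι K (LGen.ghost e)) (ι K (LGen.ghost e))
  | ghost_s (e : G.E) : LRel K G (ι K (LGen.ghost e) * ι K (LGen.vert (G.s e))) (ι K (LGen.ghost e))
  | ck1 (e f : G.E) : LRel K G (ι K (LGen.ghost e) * ι K (LGen.edge f))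
      (if e = f then ι K (LGen.vert (G.r e)) else 0)
  | ck2 (v : G.V) (h : ¬ G.IsSink v) :
      LRel K G (∑ e ∈ Finset.univ.filter (fun e => G.s e = v),
        ι K (LGen.edge e) * ι K (LGen.ghost e)) (ι K (LGen.vert v))

/-- The Leavitt path algebra of a finite graph `G` over the field `K`. -/
def LPA (K : Type) [Field K] (G : DirGraph) : Type := RingQuot (LRel K G)

instance (K : Type) [Field K] (G : DirGraph) : Ring (LPA K G) :=
  inferInstanceAs (Ring (RingQuot (LRel K G)))
instance (K : Type) [Field K] (G : DirGraph) : Algebra K (LPA K G) :=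
  inferInstanceAs (Algebra K (RingQuot (LRel K G)))

/-- The image of a generator in the Leavitt path algebra. -/
def LPA.gen (K : Type) [Field K] (G : DirGraph) (g : LGen G) : LPA K G :=
  RingQuot.mkAlgHom K (LRel K G) (FreeAlgebra.ι K g)

/-- The vertex idempotent `v ∈ L_K(G)`. -/
def LPA.vert (K : Type) [Field K] (G : DirGraph) (v : G.V) : LPA K G :=
  LPA.gen K G (LGen.vert v)

/-- Weight of a generator: `deg v = 0`, `deg e = 1`, `deg e* = -1`. -/
def LGen.wt {G : DirGraph} : LGen G → ℤ
  | .vert _ => 0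
  | .edge _ => 1
  | .ghost _ => -1

/-- The degree-`n` component of the natural ℤ-grading of the Leavitt path algebra:
the `K`-span of all monomials in the generators of total weight `n`. -/
def lpaComp (K : Type) [Field K] (G : DirGraph) (n : ℤ) : Submodule K (LPA K G) :=
  Submodule.span K {x | ∃ l : List (LGen G),
    (l.map LGen.wt).sum = n ∧ x = (l.map (LPA.gen K G)).prod}

/-- `L_K(G)` is strongly graded: `AᵢAⱼ = Aᵢ₊ⱼ` for all `i, j ∈ ℤ`. -/
def LPAStronglyGraded (K : Type) [Field K] (G : DirGraph) : Prop :=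
  ∀ m n : ℤ, lpaComp K G m * lpaComp K G n = lpaComp K G (m + n)

namespace LPAProof

variable {K : Type} [Field K] {G : DirGraph}

noncomputable def Vt (K : Type) [Field K] (G : DirGraph) (v : G.V) : LPA K G := LPA.vert K G v
noncomputable def Ed (K : Type) [Field K] (G : DirGraph) (e : G.E) : LPA K G :=
  LPA.gen K G (.edge e)
noncomputable def Gh (K : Type) [Field K] (G : DirGraph) (e : G.E) : LPA K G :=
  LPA.gen K G (.ghost e)

lemma genrel {x y : FreeAlgebra K (LGen G)} (h : LRel K G x y) :
    RingQuot.mkAlgHom K (LRel K G) x = RingQuot.mkAlgHom K (LRel K G) y :=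
  RingQuot.mkAlgHom_rel K h

lemma vert_mul (v w : G.V) : Vt K G v * Vt K G w = if v = w then Vt K G v else 0 := by
  have h := genrel (LRel.vert_mul (K := K) (G := G) v w)
  simp [map_mul, apply_ite (RingQuot.mkAlgHom K (LRel K G)), map_zero, Vt, LPA.vert,
    LPA.gen] at h ⊢; exact h

lemma sum_verts : (∑ v : G.V, Vt K G v) = (1 : LPA K G) := by
  have h := genrel (LRel.sum_verts (K := K) (G := G))
  simp [map_sum, map_one, Vt, LPA.vert, LPA.gen] at h ⊢; exact h

lemma s_edge (e : G.E) : Vt K G (G.s e) * Ed K G e = Ed K G e := by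
  have h := genrel (LRel.s_edge (K := K) (G := G) e)
  simp [map_mul, Vt, LPA.vert, Ed, LPA.gen] at h ⊢; exact h

lemma edge_r (e : G.E) : Ed K G e * Vt K G (G.r e) = Ed K G e := by
  have h := genrel (LRel.edge_r (K := K) (G := G) e)
  simp [map_mul, Vt, LPA.vert, Ed, LPA.gen] at h ⊢; exact h

lemma r_ghost (e : G.E) : Vt K G (G.r e) * Gh K G e = Gh K G e := by
  have h := genrel (LRel.r_ghost (K := K) (G := G) e)
  simp [map_mul, Vt, LPA.vert, Gh, LPA.gen] at h ⊢; exact h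

lemma ghost_s (e : G.E) : Gh K G e * Vt K G (G.s e) = Gh K G e := by
  have h := genrel (LRel.ghost_s (K := K) (G := G) e)
  simp [map_mul, Vt, LPA.vert, Gh, LPA.gen] at h ⊢; exact h

lemma ck1 (e f : G.E) : Gh K G e * Ed K G f = if e = f then Vt K G (G.r e) else 0 := by
  have h := genrel (LRel.ck1 (K := K) (G := G) e f)
  simp [map_mul, apply_ite (RingQuot.mkAlgHom K (LRel K G)), map_zero, Vt, LPA.vert, Ed, Gh,
    LPA.gen] at h ⊢; exact h

lemma ck2 (v : G.V) (h : ¬ G.IsSink v) :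
    (∑ e ∈ Finset.univ.filter (fun e => G.s e = v), Ed K G e * Gh K G e) = Vt K G v := by
  have h2 := genrel (LRel.ck2 (K := K) (G := G) v h)
  simp [map_sum, map_mul, Vt, LPA.vert, Ed, Gh, LPA.gen] at h2 ⊢; exact h2

/-- vertex times vertex, different -/
lemma vert_mul_ne {v w : G.V} (h : v ≠ w) : Vt K G v * Vt K G w = 0 := by
  simp [vert_mul, h]

lemma vert_idem (v : G.V) : Vt K G v * Vt K G v = Vt K G v := by simp [vert_mul]

lemma edge_mul_edge_zero {e f : G.E} (h : G.r e ≠ G.s f) : Ed K G e * Ed K G f = 0 := by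
  have : Ed K G e * Ed K G f = Ed K G e * (Vt K G (G.r e) * Vt K G (G.s f)) * Ed K G f := by
    conv_lhs => rw [← edge_r e, ← s_edge f]
    simp [mul_assoc]
  rw [this, vert_mul_ne h, mul_zero, zero_mul]

lemma sum_edge_ghost (hns : ¬ ∃ v : G.V, G.IsSink v) :
    (∑ e : G.E, Ed K G e * Gh K G e) = (1 : LPA K G) := by
  rw [← sum_verts]
  rw [← Finset.sum_fiberwise (g := G.s) (Finset.univ) (fun e => Ed K G e * Gh K G e)]
  exact Finset.sum_congr rfl fun v _ => ck2 v (fun hs => hns ⟨v, hs⟩)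

end LPAProof
namespace LPAProof

inductive IsPath (G : DirGraph) : G.V → G.V → List G.E → Prop
  | nil (v : G.V) : IsPath G v v []
  | cons (e : G.E) {w : G.V} {l : List G.E} (h : IsPath G (G.r e) w l) :
      IsPath G (G.s e) w (e :: l)

namespace IsPath

variable {G : DirGraph}

lemma append {u v w : G.V} {l1 l2 : List G.E} (h1 : IsPath G u v l1) (h2 : IsPath G v w l2) :
    IsPath G u w (l1 ++ l2) := by
  induction h1 with
  | nil => simpa using h2
  | cons e h ih => exact IsPath.cons e (ih h2)

lemma src_eq {u w : G.V} {e : G.E} {t : List G.E} (h : IsPath G u w (e :: t)) : u = G.s e := by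
  cases h; rfl

lemma tail {u w : G.V} {e : G.E} {t : List G.E} (h : IsPath G u w (e :: t)) :
    IsPath G (G.r e) w t := by
  cases h; assumption

lemma nil_eq {u w : G.V} (h : IsPath G u w []) : u = w := by cases h; rfl

lemma end_unique {u w w' : G.V} {l : List G.E} (h1 : IsPath G u w l) (h2 : IsPath G u w' l) :
    w = w' := by
  induction l generalizing u with
  | nil => rw [← h1.nil_eq, ← h2.nil_eq]
  | cons e t ih => exact ih h1.tail h2.tail

lemma split {u w : G.V} {l : List G.E} (h : IsPath G u w l) (k : ℕ) :
    ∃ z, IsPath G u z (l.take k) ∧ IsPath G z w (l.drop k) := by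
  induction l generalizing u k with
  | nil => exact ⟨u, by simpa using ⟨IsPath.nil u, h⟩⟩
  | cons e t ih =>
    cases k with
    | zero => exact ⟨u, IsPath.nil u, h⟩
    | succ k =>
      obtain ⟨z, h1, h2⟩ := ih h.tail k
      exact ⟨z, by simpa [h.src_eq] using ⟨IsPath.cons e h1, h2⟩⟩

lemma pow {z : G.V} {γ : List G.E} (h : IsPath G z z γ) (q : ℕ) :
    IsPath G z z (List.flatten (List.replicate q γ)) := by
  induction q with
  | zero => exact IsPath.nil z
  | succ q ih => simpa [List.replicate_succ] using h.append ih

end IsPath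

/-- From any vertex of a graph without sinks there are outgoing paths of any length. -/
lemma exists_path_of_len {G : DirGraph} (hns : ¬ ∃ v : G.V, G.IsSink v) (v : G.V) (n : ℕ) :
    ∃ w l, IsPath G v w l ∧ l.length = n := by
  induction n generalizing v with
  | zero => exact ⟨v, [], IsPath.nil v, rfl⟩
  | succ n ih =>
    have : ¬ G.IsSink v := fun hs => hns ⟨v, hs⟩
    simp only [DirGraph.IsSink, not_forall, not_not] at this
    obtain ⟨e, he⟩ := this
    obtain ⟨w, l, hl, hlen⟩ := ih (G.r e)
    exact ⟨w, e :: l, he ▸ IsPath.cons e hl, by simp [hlen]⟩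

/-- Arbitrarily long paths ending at a vertex on a cycle. -/
lemma exists_path_ending_cycle {G : DirGraph} {z : G.V} {γ : List G.E}
    (h : IsPath G z z γ) (hne : γ ≠ []) (m : ℕ) :
    ∃ u c, IsPath G u z c ∧ c.length = m := by
  have hL1 : 0 < γ.length := List.length_pos_iff.mpr hne
  obtain ⟨z', h1, h2⟩ := h.split (γ.length - m % γ.length)
  refine ⟨z', (γ.drop (γ.length - m % γ.length)) ++ List.flatten (List.replicate (m / γ.length) γ),
    h2.append (h.pow (m / γ.length)), ?_⟩
  have hmod : m % γ.length < γ.length := Nat.mod_lt _ hL1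
  have e1 : (γ.drop (γ.length - m % γ.length)).length = m % γ.length := by
    rw [List.length_drop]; omega
  have e2 : (List.flatten (List.replicate (m / γ.length) γ)).length = (m / γ.length) * γ.length := by
    simp [List.length_flatten, List.map_replicate, List.sum_replicate, smul_eq_mul, mul_comm]
  have e3 := Nat.mod_add_div' m γ.length
  simp only [List.length_append, e1, e2]
  omega

/-- A path of length ≥ card V can be extended by one at the *front*:
there is a path one longer with the same endpoint. -/
lemma exists_longer_path {G : DirGraph} {u w : G.V} {l : List G.E}
    (hl : IsPath G u w l) (hcard : Fintype.card G.V ≤ l.length) :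
    ∃ u' q, IsPath G u' w q ∧ q.length = l.length + 1 := by
  classical
  set n := l.length with hn
  have hsplit : ∀ k : Fin (n + 1), ∃ z, IsPath G u z (l.take k) ∧ IsPath G z w (l.drop k) :=
    fun k => hl.split k
  choose f hf1 hf2 using hsplit
  obtain ⟨i, j, hij, hfeq⟩ := Fintype.exists_ne_map_eq_of_card_lt f
    (by simp only [Fintype.card_fin]; omega)
  wlog hlt : (i : ℕ) < (j : ℕ) generalizing i j
  · have hne : (i : ℕ) ≠ (j : ℕ) := fun hh => hij (Fin.ext hh)
    exact this j i hij.symm hfeq.symm (by omega)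
  -- the cycle γ from f i to f j
  have hj := hf1 j
  obtain ⟨z', hz1, hz2⟩ := hj.split i
  have htt : (l.take (j : ℕ)).take (i : ℕ) = l.take (i : ℕ) := by
    rw [List.take_take]; congr 1; omega
  rw [htt] at hz1
  have hz'i : z' = f i := ((hf1 i).end_unique hz1).symm
  subst hz'i
  rw [← hfeq] at hz2
  -- hz2 : IsPath G (f i) (f i) ((l.take j).drop i)  -- after rewriting f j = f i
  have hji : (j : ℕ) ≤ n := by omega
  have hγlen : ((l.take (j : ℕ)).drop (i : ℕ)).length = (j : ℕ) - (i : ℕ) := by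
    simp [List.length_drop, List.length_take]; omega
  have hγne : (l.take (j : ℕ)).drop (i : ℕ) ≠ [] := by
    intro hemp
    rw [hemp] at hγlen; simp at hγlen; omega
  obtain ⟨u', c, hc, hclen⟩ := exists_path_ending_cycle hz2 hγne ((j : ℕ) + 1)
  refine ⟨u', c ++ l.drop (j : ℕ), ?_, ?_⟩
  · exact hc.append (by rw [hfeq]; exact hf2 j)
  · simp only [List.length_append, hclen, List.length_drop]; omega

end LPAProof
namespace LPAProof

section Rep

variable {G : DirGraph} (v₀ : G.V)

lemma start_unique {u u' w : G.V} {l : List G.E} (h1 : IsPath G u w l) (h2 : IsPath G u' w l) :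
    u = u' := by
  cases l with
  | nil => rw [h1.nil_eq, h2.nil_eq]
  | cons e t => rw [h1.src_eq, h2.src_eq]

/-- Paths ending at `v₀`, the basis of our representation. -/
abbrev PTo (G : DirGraph) (v₀ : G.V) : Type := {l : List G.E // ∃ u, IsPath G u v₀ l}

/-- The source vertex of a path ending at `v₀`. -/
def src : PTo G v₀ → G.V
  | ⟨[], _⟩ => v₀
  | ⟨e :: _, _⟩ => G.s e

lemma isPath_src (p : PTo G v₀) : IsPath G (src v₀ p) v₀ p.1 := by
  obtain ⟨l, u, hu⟩ := p
  cases l with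
  | nil => have := hu.nil_eq; subst this; exact hu
  | cons e t => rw [show src v₀ ⟨e :: t, ⟨u, hu⟩⟩ = G.s e from rfl, ← hu.src_eq]; exact hu

lemma src_eq_of {u : G.V} (p : PTo G v₀) (h : IsPath G u v₀ p.1) : src v₀ p = u :=
  start_unique (isPath_src v₀ p) h

variable (K : Type) [Field K]

/-- Action of a generator on a basis path. -/
noncomputable def act : LGen G → PTo G v₀ → (PTo G v₀ →₀ K)
  | .vert w, p => if src v₀ p = w then Finsupp.single p 1 else 0
  | .edge e, p =>
      if h : G.r e = src v₀ p then
        Finsupp.single ⟨e :: p.1, ⟨G.s e, IsPath.cons e (by rw [h]; exact isPath_src v₀ p)⟩⟩ 1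
      else 0
  | .ghost e, ⟨[], _⟩ => 0
  | .ghost e, ⟨f :: t, h⟩ =>
      if f = e then Finsupp.single ⟨t, ⟨G.r f, h.choose_spec.tail⟩⟩ 1 else 0

/-- The endomorphism associated with a generator. -/
noncomputable def TT (g : LGen G) : Module.End K (PTo G v₀ →₀ K) :=
  Finsupp.lsum K (fun p => LinearMap.toSpanSingleton K _ (act v₀ K g p))

lemma TT_single (g : LGen G) (p : PTo G v₀) (b : K) :
    TT v₀ K g (Finsupp.single p b) = b • act v₀ K g p := by
  simp [TT]

end Rep

end LPAProof
namespace LPAProof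

section Rep2

variable {G : DirGraph} (v₀ : G.V) (K : Type) [Field K]

lemma src_nil (h : ∃ u, IsPath G u v₀ []) : src v₀ ⟨[], h⟩ = v₀ := rfl
lemma src_cons (e : G.E) (t : List G.E) (h : ∃ u, IsPath G u v₀ (e :: t)) :
    src v₀ ⟨e :: t, h⟩ = G.s e := rfl

lemma src_tail {f : G.E} {t : List G.E} (h : ∃ u, IsPath G u v₀ (f :: t))
    (h' : ∃ u, IsPath G u v₀ t) : src v₀ ⟨t, h'⟩ = G.r f :=
  src_eq_of v₀ _ h.choose_spec.tail

noncomputable def phi : FreeAlgebra K (LGen G) →ₐ[K] Module.End K (PTo G v₀ →₀ K) :=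
  FreeAlgebra.lift K (TT v₀ K)

lemma phi_ι (g : LGen G) : phi v₀ K (FreeAlgebra.ι K g) = TT v₀ K g :=
  FreeAlgebra.lift_ι_apply _ _

lemma rel_eq (hsink : G.IsSink v₀) {x y : FreeAlgebra K (LGen G)} (h : LRel K G x y) :
    phi v₀ K x = phi v₀ K y := by
  induction h with
  | vert_mul v w =>
    by_cases hvw : v = w
    · subst hvw
      simp only [map_mul, if_true, eq_self_iff_true]
      apply Finsupp.lhom_ext; intro p b
      by_cases h1 : src v₀ p = v <;>
        simp [phi_ι, Module.End.mul_apply, TT_single, act, h1]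
    · simp only [map_mul, if_neg hvw, map_zero]
      apply Finsupp.lhom_ext; intro p b
      by_cases h1 : src v₀ p = w
      · have h2 : src v₀ p ≠ v := fun hh => hvw ((hh.symm.trans h1).symm ▸ rfl)
        have h3 : w ≠ v := fun hh => hvw hh.symm
        simp [phi_ι, Module.End.mul_apply, TT_single, act, h1, h2, h3]
      · simp [phi_ι, Module.End.mul_apply, TT_single, act, h1]
  | sum_verts =>
    simp only [map_sum, map_one]
    apply Finsupp.lhom_ext; intro p b
    rw [LinearMap.sum_apply]
    simp [phi_ι, TT_single, act, Finsupp.smul_single]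
  | s_edge e =>
    simp only [map_mul]
    apply Finsupp.lhom_ext; intro p b
    by_cases h1 : G.r e = src v₀ p <;>
      simp [phi_ι, Module.End.mul_apply, TT_single, act, h1, src_cons]
  | edge_r e =>
    simp only [map_mul]
    apply Finsupp.lhom_ext; intro p b
    by_cases h1 : src v₀ p = G.r e
    · simp [phi_ι, Module.End.mul_apply, TT_single, act, h1]
    · have h2 : ¬ (G.r e = src v₀ p) := fun hh => h1 hh.symm
      simp [phi_ι, Module.End.mul_apply, TT_single, act, h1, h2]
  | r_ghost e =>
    simp only [map_mul]
    apply Finsupp.lhom_ext; intro p b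
    obtain ⟨l, hl⟩ := p
    cases l with
    | nil => simp [phi_ι, Module.End.mul_apply, TT_single, act]
    | cons f t =>
      by_cases h1 : f = e
      · subst h1
        have hst : ∀ h' : ∃ u, IsPath G u v₀ t, src v₀ ⟨t, h'⟩ = G.r f :=
          fun h' => src_tail v₀ hl h'
        simp [phi_ι, Module.End.mul_apply, TT_single, act, hst]
      · simp [phi_ι, Module.End.mul_apply, TT_single, act, h1]
  | ghost_s e =>
    simp only [map_mul]
    apply Finsupp.lhom_ext; intro p b
    obtain ⟨l, hl⟩ := p
    cases l with
    | nil =>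
      by_cases h1 : src v₀ ⟨[], hl⟩ = G.s e <;>
        simp [phi_ι, Module.End.mul_apply, TT_single, act, h1]
    | cons f t =>
      by_cases h1 : f = e
      · subst h1
        simp [phi_ι, Module.End.mul_apply, TT_single, act, src_cons]
      · by_cases h2 : G.s f = G.s e <;>
          simp [phi_ι, Module.End.mul_apply, TT_single, act, h1, src_cons, h2]
  | ck1 e f =>
    by_cases hef : e = f
    · subst hef
      simp only [map_mul, if_true, eq_self_iff_true]
      apply Finsupp.lhom_ext; intro p b
      by_cases h1 : src v₀ p = G.r e
      · simp [phi_ι, Module.End.mul_apply, TT_single, act, h1]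
      · have h2 : ¬ (G.r e = src v₀ p) := fun hh => h1 hh.symm
        simp [phi_ι, Module.End.mul_apply, TT_single, act, h1, h2]
    · simp only [map_mul, if_neg hef, map_zero]
      apply Finsupp.lhom_ext; intro p b
      by_cases h1 : G.r f = src v₀ p <;>
        simp [phi_ι, Module.End.mul_apply, TT_single, act, h1, Ne.symm hef]
  | ck2 w hw =>
    have hvw : v₀ ≠ w := fun hh => hw (hh ▸ hsink)
    simp only [map_sum, map_mul]
    apply Finsupp.lhom_ext; intro p b
    rw [LinearMap.sum_apply]
    obtain ⟨l, hl⟩ := p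
    cases l with
    | nil =>
      rw [Finset.sum_eq_zero
        (fun e _ => by simp [phi_ι, Module.End.mul_apply, TT_single, act])]
      simp [phi_ι, TT_single, act, src_nil, hvw]
    | cons f t =>
      by_cases hsf : G.s f = w
      · rw [Finset.sum_eq_single f]
        · have hst : ∀ h' : ∃ u, IsPath G u v₀ t, src v₀ ⟨t, h'⟩ = G.r f :=
            fun h' => src_tail v₀ hl h'
          simp [phi_ι, Module.End.mul_apply, TT_single, act, hst, src_cons, hsf]
        · intro e _ hef
          simp [phi_ι, Module.End.mul_apply, TT_single, act, Ne.symm hef]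
        · intro hmem
          exact absurd (by simp [hsf]) hmem
      · rw [Finset.sum_eq_zero]
        · simp [phi_ι, TT_single, act, src_cons, hsf]
        · intro e he
          have hef : f ≠ e := by
            intro hh; subst hh
            exact hsf (by simpa using he)
          simp [phi_ι, Module.End.mul_apply, TT_single, act, hef]

lemma vert_ne_zero (hsink : G.IsSink v₀) : Vt K G v₀ ≠ 0 := by
  intro h0
  let Φ : LPA K G →ₐ[K] Module.End K (PTo G v₀ →₀ K) :=
    RingQuot.liftAlgHom K ⟨phi v₀ K, fun x y h => rel_eq v₀ K hsink h⟩
  have h1 : Φ (Vt K G v₀) = TT v₀ K (.vert v₀) :=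
    (RingQuot.liftAlgHom_mkAlgHom_apply (S := K) (f := phi v₀ K)
      (fun x y h => rel_eq v₀ K hsink h) (FreeAlgebra.ι K (.vert v₀))).trans
      (phi_ι v₀ K _)
  rw [h0, map_zero] at h1
  have h2 := congrArg (fun (T : Module.End K (PTo G v₀ →₀ K)) =>
    T (Finsupp.single ⟨[], ⟨v₀, IsPath.nil v₀⟩⟩ 1)) h1
  simp only [LinearMap.zero_apply, TT_single, act, src_nil, if_pos rfl, one_smul] at h2
  exact one_ne_zero (α := K) (Finsupp.single_eq_zero.mp h2.symm)

end Rep2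

end LPAProof
namespace LPAProof

section Vanish

variable {K : Type} [Field K] {G : DirGraph}

lemma vt_mul_ed (w : G.V) (e : G.E) :
    Vt K G w * Ed K G e = if w = G.s e then Ed K G e else 0 := by
  conv_lhs => rw [← s_edge e, ← mul_assoc, vert_mul]
  split_ifs with hh
  · rw [hh]; exact s_edge e
  · rw [zero_mul]

lemma vt_mul_gh (w : G.V) (e : G.E) :
    Vt K G w * Gh K G e = if w = G.r e then Gh K G e else 0 := by
  conv_lhs => rw [← r_ghost e, ← mul_assoc, vert_mul]
  split_ifs with hh
  · rw [hh]; exact r_ghost e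
  · rw [zero_mul]

lemma gh_mul_vt (e : G.E) (w : G.V) :
    Gh K G e * Vt K G w = if G.s e = w then Gh K G e else 0 := by
  conv_lhs => rw [← ghost_s e, mul_assoc, vert_mul]
  split_ifs with hh
  · exact ghost_s e
  · rw [mul_zero]

/-- `Y v gp = v · g₁* ⋯ gₖ*` where `gp = [gₖ, …, g₁]`. -/
noncomputable def Yg (K : Type) [Field K] (G : DirGraph) (v : G.V) (gp : List G.E) : LPA K G :=
  Vt K G v * ((gp.map (Gh K G)).reverse).prod

lemma Yg_nil (v : G.V) : Yg K G v [] = Vt K G v := by simp [Yg]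

lemma Yg_cons (v : G.V) (g : G.E) (gp : List G.E) :
    Yg K G v (g :: gp) = Yg K G v gp * Gh K G g := by
  simp [Yg, mul_assoc]

lemma Yg_mul_vt (v : G.V) (gp : List G.E) (w : G.V) :
    Yg K G v gp * Vt K G w = Yg K G v gp ∨ Yg K G v gp * Vt K G w = 0 := by
  cases gp with
  | nil =>
    rw [Yg_nil, vert_mul]
    split_ifs with h
    · subst h; left; rfl
    · right; rfl
  | cons g t =>
    rw [Yg_cons, mul_assoc, gh_mul_vt]
    split_ifs with h
    · left; rfl
    · right; rw [mul_zero]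

lemma vanish {v : G.V} (hs : G.IsSink v) (l : List (LGen G)) :
    ∀ gp : List G.E, (gp.length : ℤ) + 1 ≤ (l.map LGen.wt).sum →
      Yg K G v gp * ((l.map (LPA.gen K G)).prod) = 0 := by
  induction l with
  | nil =>
    intro gp h
    exfalso
    simp only [List.map_nil, List.sum_nil] at h
    omega
  | cons g t ih =>
    intro gp h
    cases g with
    | vert w =>
      rw [List.map_cons, List.prod_cons, ← mul_assoc]
      have hwt : ((t.map LGen.wt).sum) = (((LGen.vert w : LGen G) :: t).map LGen.wt).sum := by
        simp [LGen.wt]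
      rcases Yg_mul_vt (K := K) v gp w with hY | hY
      · rw [show LPA.gen K G (LGen.vert w) = Vt K G w from rfl, hY]
        exact ih gp (by rw [hwt]; exact h)
      · rw [show LPA.gen K G (LGen.vert w) = Vt K G w from rfl, hY, zero_mul]
    | edge e =>
      rw [List.map_cons, List.prod_cons, ← mul_assoc,
        show LPA.gen K G (LGen.edge e) = Ed K G e from rfl]
      cases gp with
      | nil =>
        rw [Yg_nil, vt_mul_ed, if_neg (fun hh => hs e hh.symm), zero_mul]
      | cons g' gp' =>
        rw [Yg_cons, mul_assoc (Yg K G v gp'), ck1]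
        by_cases hge : g' = e
        · rw [if_pos hge]
          rcases Yg_mul_vt (K := K) v gp' (G.r g') with hY | hY
          · rw [hY]
            refine ih gp' ?_
            simp only [List.map_cons, List.sum_cons, List.length_cons, LGen.wt] at h ⊢
            push_cast at h ⊢
            omega
          · rw [hY, zero_mul]
        · rw [if_neg hge, mul_zero, zero_mul]
    | ghost e =>
      rw [List.map_cons, List.prod_cons, ← mul_assoc,
        show LPA.gen K G (LGen.ghost e) = Gh K G e from rfl, ← Yg_cons]
      refine ih (e :: gp) ?_
      simp only [List.map_cons, List.sum_cons, List.length_cons, LGen.wt] at h ⊢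
      push_cast at h ⊢
      omega

lemma vert_mul_mem_zero {v : G.V} (hs : G.IsSink v) {x : LPA K G}
    (hx : x ∈ lpaComp K G 1 * lpaComp K G (-1)) : Vt K G v * x = 0 := by
  have hker : lpaComp K G 1 * lpaComp K G (-1) ≤
      LinearMap.ker (LinearMap.mulLeft K (Vt K G v)) := by
    rw [lpaComp, lpaComp, Submodule.span_mul_span]
    refine Submodule.span_le.mpr ?_
    rintro z hz
    rw [Set.mem_mul] at hz
    obtain ⟨a, ⟨l1, hw1, rfl⟩, b, ⟨l2, hw2, rfl⟩, rfl⟩ := hz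
    rw [SetLike.mem_coe, LinearMap.mem_ker, LinearMap.mulLeft_apply, ← mul_assoc]
    have hv : Vt K G v * (l1.map (LPA.gen K G)).prod = 0 := by
      have := vanish (K := K) hs l1 [] (by rw [hw1]; norm_num)
      simpa [Yg_nil] using this
    rw [hv, zero_mul]
  have := hker hx
  rw [LinearMap.mem_ker, LinearMap.mulLeft_apply] at this
  exact this

lemma forward_dir (hsg : LPAStronglyGraded K G) : ¬ ∃ v : G.V, G.IsSink v := by
  rintro ⟨v, hs⟩
  have h0 : Vt K G v ∈ lpaComp K G 0 :=
    Submodule.subset_span ⟨[.vert v], by simp [LGen.wt], by simp [Vt, LPA.vert]⟩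
  have h1 : Vt K G v ∈ lpaComp K G 1 * lpaComp K G (-1) := by
    rw [hsg 1 (-1)]
    simpa using h0
  have h2 := vert_mul_mem_zero hs h1
  rw [vert_idem] at h2
  exact vert_ne_zero v K hs h2

end Vanish

end LPAProof
namespace LPAProof

section Converse

variable {K : Type} [Field K] {G : DirGraph}

/-- The product `e₁ ⋯ eₙ` of the edges of a list. -/
noncomputable def FF (K : Type) [Field K] (G : DirGraph) (l : List G.E) : LPA K G :=
  (l.map (Ed K G)).prod

/-- The product `eₙ* ⋯ e₁*` of the ghost edges of a list, in reverse order. -/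
noncomputable def BB (K : Type) [Field K] (G : DirGraph) (l : List G.E) : LPA K G :=
  ((l.map (Gh K G)).reverse).prod

lemma FF_nil : FF K G [] = 1 := rfl
lemma BB_nil : BB K G [] = 1 := rfl
lemma FF_cons (e : G.E) (l : List G.E) : FF K G (e :: l) = Ed K G e * FF K G l := by
  simp [FF]
lemma BB_cons (e : G.E) (l : List G.E) : BB K G (e :: l) = BB K G l * Gh K G e := by
  simp [BB]

lemma BB_mul_FF {u w : G.V} {q : List G.E} (h : IsPath G u w q) (hne : q ≠ []) :
    BB K G q * FF K G q = Vt K G w := by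
  induction q generalizing u with
  | nil => exact absurd rfl hne
  | cons e t ih =>
    rw [BB_cons, FF_cons, mul_assoc, ← mul_assoc (Gh K G e), ck1, if_pos rfl]
    cases t with
    | nil =>
      rw [BB_nil, FF_nil, one_mul, mul_one, h.tail.nil_eq]
    | cons f t' =>
      have hrs : G.r e = G.s f := h.tail.src_eq
      rw [FF_cons, ← mul_assoc (Vt K G (G.r e)), hrs, s_edge, ← FF_cons]
      exact ih h.tail (by simp)

lemma FF_mul_vt {u w : G.V} {l : List G.E} (h : IsPath G u w l) (hne : l ≠ []) :
    FF K G l * Vt K G w = FF K G l := by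
  induction l generalizing u with
  | nil => exact absurd rfl hne
  | cons e t ih =>
    cases t with
    | nil =>
      simp only [FF_cons, FF_nil, mul_one]
      rw [← h.tail.nil_eq]
      exact edge_r e
    | cons f t' =>
      rw [FF_cons, mul_assoc, ih h.tail (by simp)]

lemma vt_mul_BB {u w : G.V} {l : List G.E} (h : IsPath G u w l) (hne : l ≠ []) :
    Vt K G w * BB K G l = BB K G l := by
  induction l generalizing u with
  | nil => exact absurd rfl hne
  | cons e t ih =>
    cases t with
    | nil => rw [BB_cons, BB_nil, one_mul, ← h.tail.nil_eq, r_ghost]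
    | cons f t' =>
      rw [BB_cons, ← mul_assoc, ih h.tail (by simp)]

lemma wt_edges_sum (l : List G.E) :
    ((l.map (LGen.edge (G := G))).map LGen.wt).sum = (l.length : ℤ) := by
  induction l with
  | nil => simp
  | cons e t ih =>
    rw [List.map_cons, List.map_cons, List.sum_cons, ih]
    simp [LGen.wt]
    push_cast; ring

lemma wt_ghosts_sum (l : List G.E) :
    ((l.map (LGen.ghost (G := G))).map LGen.wt).sum = -(l.length : ℤ) := by
  induction l with
  | nil => simp
  | cons e t ih =>
    rw [List.map_cons, List.map_cons, List.sum_cons, ih]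
    simp [LGen.wt]

lemma FF_mul_BB_mem (l q : List G.E) :
    FF K G l * BB K G q ∈ lpaComp K G ((l.length : ℤ) - (q.length : ℤ)) := by
  refine Submodule.subset_span ⟨l.map LGen.edge ++ (q.reverse.map LGen.ghost), ?_, ?_⟩
  · rw [List.map_append, List.sum_append, wt_edges_sum, wt_ghosts_sum]
    simp; ring
  · rw [List.map_append, List.prod_append]
    congr 1
    · rw [List.map_map]; rfl
    · simp only [List.map_map, BB, List.map_reverse]
      rfl

/-- Span of `p p*` over paths `p` of length `n`. -/
noncomputable def pathComp (K : Type) [Field K] (G : DirGraph) (n : ℕ) :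
    Submodule K (LPA K G) :=
  Submodule.span K {x | ∃ u w l, IsPath G u w l ∧ l.length = n ∧ x = FF K G l * BB K G l}

lemma one_mem_pathComp (hns : ¬ ∃ v : G.V, G.IsSink v) (hV : Nonempty G.V) (n : ℕ) :
    (1 : LPA K G) ∈ pathComp K G n := by
  induction n with
  | zero =>
    obtain ⟨v⟩ := hV
    exact Submodule.subset_span ⟨v, v, [], IsPath.nil v, rfl, by rw [FF_nil, BB_nil, one_mul]⟩
  | succ n ih =>
    have hstep : ∀ e : G.E, ∀ x ∈ pathComp K G n, Ed K G e * x * Gh K G e ∈ pathComp K G (n+1) := by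
      intro e
      have : pathComp K G n ≤ Submodule.comap
          ((LinearMap.mulRight K (Gh K G e)).comp (LinearMap.mulLeft K (Ed K G e)))
          (pathComp K G (n+1)) := by
        refine Submodule.span_le.mpr ?_
        rintro x ⟨u, w, l, hl, hlen, rfl⟩
        simp only [SetLike.mem_coe, Submodule.mem_comap, LinearMap.coe_comp, Function.comp_apply,
          LinearMap.mulLeft_apply, LinearMap.mulRight_apply]
        cases l with
        | nil =>
          rw [FF_nil, BB_nil, one_mul, mul_one]
          exact Submodule.subset_span ⟨G.s e, G.r e, [e],
            IsPath.cons e (IsPath.nil _), by simp only [List.length_nil] at hlen; subst hlen; simp,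
            by rw [FF_cons, FF_nil, BB_cons, BB_nil, mul_one, one_mul]⟩
        | cons f t =>
          by_cases hre : G.r e = G.s f
          · refine Submodule.subset_span ⟨G.s e, w, e :: f :: t,
              IsPath.cons e (by rw [hre, ← hl.src_eq]; exact hl),
              by rw [List.length_cons, hlen], ?_⟩
            simp only [FF_cons, BB_cons, mul_assoc]
          · have h0 : Ed K G e * FF K G (f :: t) = 0 := by
              rw [FF_cons, ← mul_assoc, edge_mul_edge_zero hre, zero_mul]
            rw [← mul_assoc, h0, zero_mul, zero_mul]
            exact Submodule.zero_mem _
      intro x hx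
      exact this hx
    have h1 : (1 : LPA K G) = ∑ e : G.E, Ed K G e * 1 * Gh K G e := by
      conv_lhs => rw [← sum_edge_ghost hns]
      exact Finset.sum_congr rfl fun e _ => by rw [mul_one]
    rw [h1]
    exact Submodule.sum_mem _ fun e _ => hstep e 1 ih

lemma pathComp_le (hns : ¬ ∃ v : G.V, G.IsSink v) (hV : Nonempty G.V) :
    pathComp K G (Fintype.card G.V) ≤ lpaComp K G (-1) * lpaComp K G 1 := by
  refine Submodule.span_le.mpr ?_
  rintro x ⟨u, w, l, hl, hlen, rfl⟩
  have hlne : l ≠ [] := by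
    intro hh
    rw [hh] at hlen
    simp only [List.length_nil] at hlen
    have := Fintype.card_pos_iff.mpr hV
    omega
  obtain ⟨u', q, hq, hqlen⟩ := exists_longer_path hl (le_of_eq hlen.symm)
  have hqne : q ≠ [] := by
    intro hh; rw [hh] at hqlen; simp only [List.length_nil] at hqlen; omega
  have key : FF K G l * BB K G l = (FF K G l * BB K G q) * (FF K G q * BB K G l) := by
    rw [mul_assoc, ← mul_assoc (BB K G q), BB_mul_FF hq hqne, ← mul_assoc,
      FF_mul_vt hl hlne]
  rw [SetLike.mem_coe, key]
  have m1 : FF K G l * BB K G q ∈ lpaComp K G (-1) := by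
    have hmem := FF_mul_BB_mem (K := K) (G := G) l q
    have hidx : ((l.length : ℤ) - (q.length : ℤ)) = -1 := by omega
    rwa [hidx] at hmem
  have m2 : FF K G q * BB K G l ∈ lpaComp K G 1 := by
    have hmem := FF_mul_BB_mem (K := K) (G := G) q l
    have hidx : ((q.length : ℤ) - (l.length : ℤ)) = 1 := by omega
    rwa [hidx] at hmem
  exact Submodule.mul_mem_mul m1 m2

end Converse

end LPAProof
namespace LPAProof

section Main

variable {K : Type} [Field K] {G : DirGraph}

lemma lpaComp_mul_le (m n : ℤ) :
    lpaComp K G m * lpaComp K G n ≤ lpaComp K G (m + n) := by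
  rw [lpaComp, lpaComp, Submodule.span_mul_span]
  refine Submodule.span_le.mpr ?_
  rintro z hz
  rw [Set.mem_mul] at hz
  obtain ⟨a, ⟨l1, hw1, rfl⟩, b, ⟨l2, hw2, rfl⟩, rfl⟩ := hz
  refine Submodule.subset_span ⟨l1 ++ l2, ?_, ?_⟩
  · rw [List.map_append, List.sum_append, hw1, hw2]
  · rw [List.map_append, List.prod_append]

lemma one_mem_comp_zero : (1 : LPA K G) ∈ lpaComp K G 0 :=
  Submodule.subset_span ⟨[], by simp, by simp⟩

lemma one_mem_pos (hns : ¬ ∃ v : G.V, G.IsSink v) :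
    (1 : LPA K G) ∈ lpaComp K G 1 * lpaComp K G (-1) := by
  rw [← sum_edge_ghost (K := K) hns]
  refine Submodule.sum_mem _ fun e _ => Submodule.mul_mem_mul ?_ ?_
  · exact Submodule.subset_span ⟨[.edge e], by simp [LGen.wt], by rw [List.map_singleton, List.prod_singleton]; rfl⟩
  · exact Submodule.subset_span ⟨[.ghost e], by simp [LGen.wt], by rw [List.map_singleton, List.prod_singleton]; rfl⟩

lemma one_mem_neg (hns : ¬ ∃ v : G.V, G.IsSink v) (hV : Nonempty G.V) :
    (1 : LPA K G) ∈ lpaComp K G (-1) * lpaComp K G 1 :=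
  pathComp_le hns hV (one_mem_pathComp hns hV (Fintype.card G.V))

lemma comp_succ_le (hns : ¬ ∃ v : G.V, G.IsSink v) (hV : Nonempty G.V) (k : ℤ) :
    lpaComp K G (k + 1) ≤ lpaComp K G k * lpaComp K G 1 := by
  intro x hx
  have h1 : x * 1 ∈ lpaComp K G (k + 1) * (lpaComp K G (-1) * lpaComp K G 1) :=
    Submodule.mul_mem_mul hx (one_mem_neg hns hV)
  rw [mul_one] at h1
  have h2 : lpaComp K G (k + 1) * (lpaComp K G (-1) * lpaComp K G 1) ≤
      lpaComp K G k * lpaComp K G 1 := by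
    rw [← mul_assoc]
    refine mul_le_mul' ?_ le_rfl
    have := lpaComp_mul_le (K := K) (G := G) (k + 1) (-1)
    rwa [show k + 1 + -1 = k by ring] at this
  exact h2 h1

lemma comp_pred_le (hns : ¬ ∃ v : G.V, G.IsSink v) (k : ℤ) :
    lpaComp K G (k - 1) ≤ lpaComp K G k * lpaComp K G (-1) := by
  intro x hx
  have h1 : x * 1 ∈ lpaComp K G (k - 1) * (lpaComp K G 1 * lpaComp K G (-1)) :=
    Submodule.mul_mem_mul hx (one_mem_pos hns)
  rw [mul_one] at h1
  have h2 : lpaComp K G (k - 1) * (lpaComp K G 1 * lpaComp K G (-1)) ≤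
      lpaComp K G k * lpaComp K G (-1) := by
    rw [← mul_assoc]
    refine mul_le_mul' ?_ le_rfl
    have := lpaComp_mul_le (K := K) (G := G) (k - 1) 1
    rwa [show k - 1 + 1 = k by ring] at this
  exact h2 h1

lemma comp_add_le (hns : ¬ ∃ v : G.V, G.IsSink v) (hV : Nonempty G.V) (n : ℤ) :
    ∀ m : ℤ, lpaComp K G (m + n) ≤ lpaComp K G m * lpaComp K G n := by
  induction n using Int.induction_on with
  | zero =>
    intro m x hx
    rw [add_zero] at hx
    have := Submodule.mul_mem_mul hx (one_mem_comp_zero (K := K) (G := G))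
    rwa [mul_one] at this
  | succ i ih =>
    intro m
    calc lpaComp K G (m + ((i : ℤ) + 1)) = lpaComp K G ((m + i) + 1) := by ring_nf
      _ ≤ lpaComp K G (m + i) * lpaComp K G 1 := comp_succ_le hns hV (m + i)
      _ ≤ (lpaComp K G m * lpaComp K G i) * lpaComp K G 1 := mul_le_mul' (ih m) le_rfl
      _ = lpaComp K G m * (lpaComp K G i * lpaComp K G 1) := mul_assoc _ _ _
      _ ≤ lpaComp K G m * lpaComp K G ((i : ℤ) + 1) :=
        mul_le_mul' le_rfl (lpaComp_mul_le i 1)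
  | pred i ih =>
    intro m
    calc lpaComp K G (m + (-(i : ℤ) - 1)) = lpaComp K G ((m + -(i : ℤ)) - 1) := by ring_nf
      _ ≤ lpaComp K G (m + -(i : ℤ)) * lpaComp K G (-1) := comp_pred_le hns (m + -(i : ℤ))
      _ ≤ (lpaComp K G m * lpaComp K G (-(i : ℤ))) * lpaComp K G (-1) :=
        mul_le_mul' (ih m) le_rfl
      _ = lpaComp K G m * (lpaComp K G (-(i : ℤ)) * lpaComp K G (-1)) := mul_assoc _ _ _
      _ ≤ lpaComp K G m * lpaComp K G (-(i : ℤ) - 1) := by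
        refine mul_le_mul' le_rfl ?_
        have := lpaComp_mul_le (K := K) (G := G) (-(i : ℤ)) (-1)
        rwa [show -(i : ℤ) + -1 = -(i : ℤ) - 1 by ring] at this

end Main

end LPAProof

/-- Let `E` be a finite directed graph.  The Leavitt path algebra
`L_K(E)` over a field `K`, with its natural ℤ-grading, is a strongly graded ring if and
only if `E` has no sinks. -/
theorem lpa_strongly_graded_iff_no_sinks (K : Type) [Field K] (G : DirGraph) :
    LPAStronglyGraded K G ↔ ¬ ∃ v : G.V, G.IsSink v := by
  constructor
  · exact LPAProof.forward_dir
  · intro hns m n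
    by_cases hV : Nonempty G.V
    · refine le_antisymm (LPAProof.lpaComp_mul_le m n) ?_
      exact LPAProof.comp_add_le hns hV n m
    · have hempty : IsEmpty G.V := not_nonempty_iff.mp hV
      have h10 : (1 : LPA K G) = 0 := by
        rw [← LPAProof.sum_verts (K := K) (G := G)]
        simp
      have hsub : ∀ x : LPA K G, x = 0 := fun x => by
        calc x = x * 1 := (mul_one x).symm
          _ = x * 0 := by rw [h10]
          _ = 0 := mul_zero x
      ext x
      rw [hsub x]
      simp only [Submodule.zero_mem]
end

section
/- Let E be a finite directed graph with no sources, E⁰ = {v₁,...,vₙ}, and for each i choose an edge eᵢ with r(eᵢ) = vᵢ. Set t₊ = e₁ + ... + eₙ and t₋ = e₁* + ... + eₙ* in L_K(E). Then t₋t₊ = 1 and t₊t₋ is an idempotent, and L_K(E) is graded isomorphic to the corner skew Laurent polynomial ring L_K(E)₀[t₊, t₋, φ], where φ(a) = t₊ a t₋. -/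
section Aux
variable {K : Type} [Field K] {G : DirGraph}

theorem lpaComp_monomial_mem (l : List (LGen G)) :
    ((l.map (LPA.gen K G)).prod : LPA K G) ∈ lpaComp K G ((l.map LGen.wt).sum) :=
  Submodule.subset_span ⟨l, rfl, rfl⟩

theorem lpaComp_mul_mem {m n : ℤ} {x y : LPA K G}
    (hx : x ∈ lpaComp K G m) (hy : y ∈ lpaComp K G n) :
    x * y ∈ lpaComp K G (m + n) := by
  induction hx using Submodule.span_induction with
  | mem x hx =>
    obtain ⟨l, hl, rfl⟩ := hx
    induction hy using Submodule.span_induction with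
    | mem y hy =>
      obtain ⟨l', hl', rfl⟩ := hy
      have : ((l.map (LPA.gen K G)).prod * (l'.map (LPA.gen K G)).prod : LPA K G)
          = ((l ++ l').map (LPA.gen K G)).prod := by
        rw [List.map_append, List.prod_append]
      rw [this]
      have h := lpaComp_monomial_mem (K := K) (l ++ l')
      rwa [List.map_append, List.sum_append, hl, hl'] at h
    | zero => rw [mul_zero]; exact Submodule.zero_mem _
    | add a b _ _ ha hb => rw [mul_add]; exact Submodule.add_mem _ ha hb
    | smul r a _ ha => rw [mul_smul_comm]; exact Submodule.smul_mem _ r ha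
  | zero => rw [zero_mul]; exact Submodule.zero_mem _
  | add a b _ _ ha hb => rw [add_mul]; exact Submodule.add_mem _ ha hb
  | smul r a _ ha => rw [smul_mul_assoc]; exact Submodule.smul_mem _ r ha

theorem lpaComp_gen_mem (g : LGen G) : LPA.gen K G g ∈ lpaComp K G (g.wt) := by
  have h := lpaComp_monomial_mem (K := K) [g]
  simpa using h

theorem lpaComp_one_mem : (1 : LPA K G) ∈ lpaComp K G 0 := by
  have h := lpaComp_monomial_mem (K := K) ([] : List (LGen G))
  simpa using h

theorem lpa_tm_tp (c : G.V → G.E) (hc : ∀ v, G.r (c v) = v) :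
    (∑ v : G.V, LPA.gen K G (LGen.ghost (c v))) *
      (∑ v : G.V, LPA.gen K G (LGen.edge (c v))) = 1 := by
  classical
  have hcinj : Function.Injective c := by
    intro v w h
    rw [← hc v, ← hc w, h]
  set π := RingQuot.mkAlgHom K (LRel K G) with hπ
  have hrel : ∀ x y, LRel K G x y → π x = π y := fun x y h => RingQuot.mkAlgHom_rel K h
  have key : ∀ v w : G.V,
      LPA.gen K G (LGen.ghost (c v)) * LPA.gen K G (LGen.edge (c w))
        = if v = w then LPA.gen K G (LGen.vert (G.r (c v))) else 0 := by
    intro v w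
    have h1 : LPA.gen K G (LGen.ghost (c v)) * LPA.gen K G (LGen.edge (c w))
        = π (FreeAlgebra.ι K (LGen.ghost (c v)) * FreeAlgebra.ι K (LGen.edge (c w))) := by
      rw [map_mul]; rfl
    rw [h1, hrel _ _ (LRel.ck1 (c v) (c w))]
    by_cases h : v = w
    · subst h; simp [LPA.gen]; rfl
    · have : c v ≠ c w := fun hcc => h (hcinj hcc)
      simp [this, h]; rfl
  rw [Finset.sum_mul_sum]
  have h2 : ∀ v : G.V, ∑ w : G.V,
      LPA.gen K G (LGen.ghost (c v)) * LPA.gen K G (LGen.edge (c w))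
        = LPA.gen K G (LGen.vert (G.r (c v))) := by
    intro v
    rw [Finset.sum_congr rfl (fun w _ => key v w)]
    simp
  rw [Finset.sum_congr rfl (fun v _ => h2 v)]
  have h3 : ∑ v : G.V, LPA.gen K G (LGen.vert (G.r (c v))) = ∑ v : G.V, LPA.gen K G (LGen.vert v) := by
    apply Finset.sum_congr rfl
    intro v _
    rw [hc v]
  rw [h3]
  have h4 : (∑ v : G.V, LPA.gen K G (LGen.vert v) : LPA K G)
      = π (∑ v : G.V, FreeAlgebra.ι K (LGen.vert v)) := by
    rw [map_sum]; rfl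
  rw [h4, hrel _ _ (LRel.sum_verts), map_one]; rfl

end Aux

/-- Let `E` be a finite directed graph with no sources; for each vertex
`v` choose an edge `c v` with `r (c v) = v`, and set `t₊ = Σ_v c v`, `t₋ = Σ_v (c v)*` in
`L_K(E)`.  Then `t₋t₊ = 1` and `t₊t₋` is an idempotent, and `L_K(E)` is graded isomorphic
to the corner skew Laurent polynomial ring `L_K(E)₀[t₊, t₋, φ]` with `φ(a) = t₊ a t₋`:
`t₊` has degree `1`, `t₋` has degree `-1`, `φ` maps the degree-zero component `L_K(E)₀`
into the corner `p L_K(E)₀ p` (`p = t₊t₋`), the skew relations `a t₋ = t₋ φ(a)` and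
`t₊ a = φ(a) t₊` hold, and the homogeneous components are
`L_K(E)ₙ = L_K(E)₀ · t₊ⁿ` and `L_K(E)₋ₙ = t₋ⁿ · L_K(E)₀` for `n ≥ 0`. -/
theorem lpa_is_corner_skew_laurent (K : Type) [Field K] (G : DirGraph)
    (hns : ¬ ∃ v : G.V, G.IsSource v) (c : G.V → G.E) (hc : ∀ v, G.r (c v) = v) :
    letI tp : LPA K G := ∑ v : G.V, LPA.gen K G (LGen.edge (c v))
    letI tm : LPA K G := ∑ v : G.V, LPA.gen K G (LGen.ghost (c v))
    tm * tp = 1 ∧ (tp * tm) * (tp * tm) = tp * tm ∧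
      tp ∈ lpaComp K G 1 ∧ tm ∈ lpaComp K G (-1) ∧
      (∀ a ∈ lpaComp K G 0, tp * a * tm ∈ lpaComp K G 0 ∧
        tp * (tp * a * tm) * tm ∈ lpaComp K G 0 ∧
        a * tm = tm * (tp * a * tm) ∧ tp * a = (tp * a * tm) * tp) ∧
      (∀ n : ℕ, (lpaComp K G (n : ℤ) : Set (LPA K G)) =
          {x | ∃ a ∈ lpaComp K G 0, x = a * tp ^ n} ∧
        (lpaComp K G (-(n : ℤ)) : Set (LPA K G)) =
          {x | ∃ a ∈ lpaComp K G 0, x = tm ^ n * a}) := by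
  classical
  set tp : LPA K G := ∑ v : G.V, LPA.gen K G (LGen.edge (c v)) with htpdef
  set tm : LPA K G := ∑ v : G.V, LPA.gen K G (LGen.ghost (c v)) with htmdef
  have htmtp : tm * tp = 1 := lpa_tm_tp c hc
  have htp1 : tp ∈ lpaComp K G 1 := by
    apply Submodule.sum_mem
    intro v _
    exact lpaComp_gen_mem (LGen.edge (c v))
  have htm1 : tm ∈ lpaComp K G (-1) := by
    apply Submodule.sum_mem
    intro v _
    exact lpaComp_gen_mem (LGen.ghost (c v))
  have htppow : ∀ n : ℕ, tp ^ n ∈ lpaComp K G (n : ℤ) := by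
    intro n
    induction n with
    | zero => simpa using lpaComp_one_mem
    | succ n ih =>
      have h : ((n:ℤ)+1) = ((n+1:ℕ):ℤ) := by push_cast; ring
      rw [pow_succ, ← h]
      exact lpaComp_mul_mem ih htp1
  have htmpow : ∀ n : ℕ, tm ^ n ∈ lpaComp K G (-(n : ℤ)) := by
    intro n
    induction n with
    | zero => simpa using lpaComp_one_mem
    | succ n ih =>
      have h : (-(n:ℤ)) + (-1) = -((n+1:ℕ):ℤ) := by push_cast; ring
      rw [pow_succ, ← h]
      exact lpaComp_mul_mem ih htm1
  have htmtppow : ∀ n : ℕ, tm ^ n * tp ^ n = 1 := by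
    intro n
    induction n with
    | zero => simp
    | succ n ih =>
      rw [pow_succ tm, pow_succ' tp, mul_assoc, ← mul_assoc tm, htmtp, one_mul, ih]
  refine ⟨htmtp, ?_, htp1, htm1, ?_, ?_⟩
  · rw [mul_assoc, ← mul_assoc tm, htmtp, one_mul]
  · intro a ha
    have h1 : tp * a * tm ∈ lpaComp K G 0 := by
      have := lpaComp_mul_mem (lpaComp_mul_mem htp1 ha) htm1
      simpa using this
    refine ⟨h1, ?_, ?_, ?_⟩
    · have := lpaComp_mul_mem (lpaComp_mul_mem htp1 h1) htm1
      simpa using this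
    · rw [← mul_assoc, ← mul_assoc, htmtp, one_mul]
    · rw [mul_assoc, mul_assoc, htmtp, mul_one]
  · intro n
    constructor
    · ext x
      simp only [SetLike.mem_coe, Set.mem_setOf_eq]
      constructor
      · intro hx
        refine ⟨x * tm ^ n, ?_, ?_⟩
        · have := lpaComp_mul_mem hx (htmpow n)
          simpa using this
        · rw [mul_assoc, htmtppow, mul_one]
      · rintro ⟨a, ha, rfl⟩
        have := lpaComp_mul_mem ha (htppow n)
        simpa using this
    · ext x
      simp only [SetLike.mem_coe, Set.mem_setOf_eq]
      constructor
      · intro hx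
        refine ⟨tp ^ n * x, ?_, ?_⟩
        · have := lpaComp_mul_mem (htppow n) hx
          simpa using this
        · rw [← mul_assoc, htmtppow, one_mul]
      · rintro ⟨a, ha, rfl⟩
        have := lpaComp_mul_mem (htmpow n) ha
        simpa using this
end
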